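/- Let G be a linearly ordered abelian group. The statement 'G has a nontrivial convex 2-divisible subgroup' is equivalent to: there exists γ ∈ G with 0 < γ such that for all δ with 0 ≤ δ ≤ γ there exists ε with δ = 2ε. -/

import Mathlib

lemma aux_div {G : Type*} [AddCommGroup G] [LinearOrder G] [IsOrderedAddMonoid G] {γ : G} (hγ : 0 < γ)
    (h : ∀ δ : G, 0 ≤ δ → δ ≤ γ → ∃ ε : G, δ = 2 • ε) :
    ∀ n : ℕ, ∀ δ : G, 0 ≤ δ → δ ≤ n • γ → ∃ ε : G, δ = 2 • ε := by
  intro n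
  induction n with
  | zero =>
    intro δ h0 h1
    simp only [zero_smul] at h1
    exact ⟨0, by rw [le_antisymm h1 h0]; simp⟩
  | succ n ih =>
    intro δ h0 h1
    rcases le_or_gt δ γ with hle | hlt
    · exact h δ h0 hle
    · obtain ⟨ε₀, hε₀⟩ := h γ hγ.le le_rfl
      obtain ⟨ε, hε⟩ := ih (δ - γ) (sub_nonneg.mpr hlt.le) (by
        rw [succ_nsmul] at h1; exact sub_le_iff_le_add.mpr h1)
      refine ⟨ε + ε₀, ?_⟩
      rw [smul_add, ← hε, ← hε₀]; abel

/-- Let `G` be a linearly ordered abelian group.  `G` has a nontrivial convex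
`2`-divisible subgroup if and only if there exists `γ > 0` in `G` such that every
`δ` with `0 ≤ δ ≤ γ` is of the form `δ = 2ε`. -/
theorem exists_nontrivial_convex_two_divisible_subgroup_iff
    {G : Type*} [AddCommGroup G] [LinearOrder G] [IsOrderedAddMonoid G] :
    (∃ Δ : AddSubgroup G, Δ ≠ ⊥ ∧
        (∀ γ ∈ Δ, ∀ δ : G, 0 ≤ δ → δ ≤ γ → δ ∈ Δ) ∧
        (∀ δ ∈ Δ, ∃ ε ∈ Δ, δ = 2 • ε)) ↔
      (∃ γ : G, 0 < γ ∧ ∀ δ : G, 0 ≤ δ → δ ≤ γ → ∃ ε : G, δ = 2 • ε) := by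
  constructor
  · rintro ⟨Δ, hne, hconv, hdiv⟩
    obtain ⟨x, hx0⟩ := AddSubgroup.ne_bot_iff_exists_ne_zero.mp hne
    have hx : (x : G) ∈ Δ := x.2
    have hx0 : (x : G) ≠ 0 := fun hh => hx0 (Subtype.ext hh)
    refine ⟨|(x : G)|, abs_pos.mpr hx0, fun δ h0 h1 => ?_⟩
    have hxa : |(x : G)| ∈ Δ := by
      rcases abs_cases (x : G) with ⟨h, _⟩ | ⟨h, _⟩
      · rw [h]; exact hx
      · rw [h]; exact Δ.neg_mem hx
    obtain ⟨ε, _, hε⟩ := hdiv δ (hconv _ hxa δ h0 h1)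
    exact ⟨ε, hε⟩
  · rintro ⟨γ, hγ, h⟩
    refine ⟨{ carrier := {x : G | ∃ n : ℕ, |x| ≤ n • γ}
              zero_mem' := ⟨0, by simp⟩
              add_mem' := ?_
              neg_mem' := ?_ }, ?_, ?_, ?_⟩
    · rintro a b ⟨n, hn⟩ ⟨m, hm⟩
      exact ⟨n + m, (abs_add_le a b).trans (by rw [add_smul]; exact add_le_add hn hm)⟩
    · rintro a ⟨n, hn⟩; exact ⟨n, by rwa [abs_neg]⟩
    · intro hbot
      have : γ ∈ (⊥ : AddSubgroup G) := hbot ▸ ⟨1, by simp [abs_of_pos hγ]⟩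
      simp only [AddSubgroup.mem_bot] at this
      exact absurd this hγ.ne'
    · rintro x ⟨n, hn⟩ δ h0 h1
      exact ⟨n, le_trans (by rw [abs_of_nonneg h0]; exact h1.trans (le_abs_self x)) hn⟩
    · rintro δ ⟨n, hn⟩
      obtain ⟨ε, hε⟩ := aux_div hγ h n |δ| (abs_nonneg δ) hn
      have hε0 : 0 ≤ ε := by
        by_contra hc
        push_neg at hc
        have : 2 • ε < 0 := by rw [two_smul]; exact add_neg hc hc
        exact absurd (hε ▸ abs_nonneg δ) (not_le.mpr this)
      have hεmem : ε ∈ {x : G | ∃ n : ℕ, |x| ≤ n • γ} := by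
        refine ⟨n, ?_⟩
        rw [abs_of_nonneg hε0]
        have : ε ≤ 2 • ε := by rw [two_smul]; exact le_add_of_nonneg_left hε0
        exact this.trans (hε ▸ hn)
      rcases abs_cases δ with ⟨ha, _⟩ | ⟨ha, _⟩
      · exact ⟨ε, hεmem, by rw [← ha, hε]⟩
      · refine ⟨-ε, AddSubgroup.neg_mem _ hεmem, ?_⟩
        have : -δ = 2 • ε := ha ▸ hε
        rw [smul_neg, ← this, neg_neg]
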